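/- Let $F$ be a non-archimedean local field and $z \in \Omega_F^r$ a point of the Berkovich Drinfeld period domain, normalized so that $e_r(z) = 1$, with associated norm $\nu_z$ on $F^r$ and imaginary part $\mathrm{im}(z) = D(\nu_z)$. For $g = (a_{ij}) \in \mathrm{GL}_r(F)$ with automorphy factor $j(g,z) = (a_{r1}e_1 + \cdots + a_{rr}e_r)(z)$, one has $\mathrm{im}(g\cdot z) = \frac{|\det g|_F}{|j(g,z)|^r}\cdot\mathrm{im}(z)$. -/

import Mathlib

/-- An abstract (non-archimedean, multiplicative) absolute value on a field `F`. -/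
structure NAAbs (F : Type*) [Field F] where
  abs : F → ℝ
  nonneg : ∀ a, 0 ≤ abs a
  eq_zero : ∀ a, abs a = 0 ↔ a = 0
  map_mul : ∀ a b, abs (a * b) = abs a * abs b
  ultra : ∀ a b, abs (a + b) ≤ max (abs a) (abs b)

/-- `F` together with `A` is a non-archimedean *local* field with uniformizer `π`:
the value group is discrete with generator `|π| < 1`, the residue field is finite,
and `F` is complete. -/
def NAAbs.IsLocal {F : Type*} [Field F] (A : NAAbs F) (π : F) : Prop :=
  π ≠ 0 ∧ A.abs π < 1 ∧ (∀ a : F, A.abs a < 1 → A.abs a ≤ A.abs π) ∧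
  (∃ S : Finset F, ∀ a : F, A.abs a ≤ 1 → ∃ s ∈ S, A.abs (a - s) < 1) ∧
  (∀ f : ℕ → F, (∀ ε : ℝ, 0 < ε → ∃ N, ∀ m ≥ N, ∀ n ≥ N, A.abs (f m - f n) < ε) →
    ∃ x : F, ∀ ε : ℝ, 0 < ε → ∃ N, ∀ n ≥ N, A.abs (f n - x) < ε)

/-- A non-archimedean norm on an `F`-vector space `V`, relative to the absolute value `A`. -/
structure NANorm {F : Type*} [Field F] (A : NAAbs F)
    (V : Type*) [AddCommGroup V] [Module F V] where
  nu : V → ℝ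
  nonneg : ∀ v, 0 ≤ nu v
  eq_zero : ∀ v, nu v = 0 ↔ v = 0
  smul_eq : ∀ (a : F) (v : V), nu (a • v) = A.abs a * nu v
  ultra : ∀ u v, nu (u + v) ≤ max (nu u) (nu v)

/-- `b` is an `O_F`-basis of the `O_F`-lattice `L ⊆ V`. -/
def IsLatticeBasis {F : Type*} [Field F] (A : NAAbs F)
    {V : Type*} [AddCommGroup V] [Module F V]
    {ι : Type*} [Fintype ι] (b : ι → V) (L : Set V) : Prop :=
  LinearIndependent F b ∧
  ∀ v : V, v ∈ L ↔ ∃ c : ι → F, (∀ i, A.abs (c i) ≤ 1) ∧ v = ∑ i, c i • b i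

/-- `b` is orthogonal with respect to the norm(-like function) `νn`. -/
def IsOrthogonalFor {F : Type*} [Field F] (A : NAAbs F)
    {V : Type*} [AddCommGroup V] [Module F V]
    {ι : Type*} [Fintype ι] (νn : V → ℝ) (b : ι → V) : Prop :=
  ∀ c : ι → F, νn (∑ i, c i • b i) = ⨆ i, νn (c i • b i)

section Aux
variable {F : Type*} [Field F]

def NAAbs.toAbs (A : NAAbs F) : AbsoluteValue F ℝ where
  toFun := A.abs
  map_mul' := A.map_mul
  nonneg' := A.nonneg
  eq_zero' := A.eq_zero
  add_le' a b := (A.ultra a b).trans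
    (max_le (le_add_of_nonneg_right (A.nonneg b)) (le_add_of_nonneg_left (A.nonneg a)))

lemma NAAbs.abs_one (A : NAAbs F) : A.abs 1 = 1 := A.toAbs.map_one

lemma NAAbs.abs_prod (A : NAAbs F) {ι : Type*} (s : Finset ι) (f : ι → F) :
    A.abs (∏ i ∈ s, f i) = ∏ i ∈ s, A.abs (f i) := map_prod A.toAbs f s

lemma NAAbs.abs_inv (A : NAAbs F) (a : F) : A.abs a⁻¹ = (A.abs a)⁻¹ := map_inv₀ A.toAbs a

lemma NAAbs.abs_neg (A : NAAbs F) (a : F) : A.abs (-a) = A.abs a := A.toAbs.map_neg a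

lemma NAAbs.abs_sum_le (A : NAAbs F) {ι : Type*} {s : Finset ι} {f : ι → F} {b : ℝ}
    (hb : 0 ≤ b) (h : ∀ i ∈ s, A.abs (f i) ≤ b) : A.abs (∑ i ∈ s, f i) ≤ b := by
  induction s using Finset.cons_induction with
  | empty =>
      rw [Finset.sum_empty, (A.eq_zero 0).mpr rfl]; exact hb
  | cons a s ha ih =>
      rw [Finset.sum_cons]
      exact (A.ultra _ _).trans (max_le (h a (Finset.mem_cons_self a s))
        (ih fun i hi => h i (Finset.mem_cons_of_mem hi)))

lemma NAAbs.abs_sign_mul (A : NAAbs F) {n : ℕ} (σ : Equiv.Perm (Fin n)) (x : F) :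
    A.abs (((Equiv.Perm.sign σ : ℤ) : F) * x) = A.abs x := by
  rcases Int.units_eq_one_or (Equiv.Perm.sign σ) with h | h <;> simp [h, A.map_mul, A.abs_neg]

variable {V : Type*} [AddCommGroup V] [Module F V]

lemma sum_smul_sum {n : ℕ} (a : Fin n → F) (M : Fin n → Fin n → F) (v : Fin n → V) :
    ∑ j, a j • ∑ k, M j k • v k = ∑ k, (∑ j, a j * M j k) • v k := by
  simp only [Finset.smul_sum, smul_smul, Finset.sum_smul]
  exact Finset.sum_comm

lemma det_mul_prod_le (A : NAAbs F) (ν : NANorm A V) {n : ℕ} (u w : Fin n → V)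
    (c : Matrix (Fin n) (Fin n) F)
    (hw : ∀ i, w i = ∑ j, c i j • u j) (huo : IsOrthogonalFor A ν.nu u) :
    A.abs c.det * ∏ i, ν.nu (u i) ≤ ∏ i, ν.nu (w i) := by
  have hterm : ∀ i j, A.abs (c i j) * ν.nu (u j) ≤ ν.nu (w i) := by
    intro i j
    have h1 : ν.nu (w i) = ⨆ j, ν.nu (c i j • u j) := by rw [hw i]; exact huo (c i)
    rw [h1]
    have := le_ciSup (f := fun j => ν.nu (c i j • u j)) (Set.finite_range _).bddAbove j
    simpa [ν.smul_eq] using this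
  set P := ∏ i, ν.nu (u i) with hP
  have hPnn : 0 ≤ P := Finset.prod_nonneg fun i _ => ν.nonneg _
  have hperm : ∀ σ : Equiv.Perm (Fin n), A.abs (∏ i, c (σ i) i) * P ≤ ∏ i, ν.nu (w i) := by
    intro σ
    rw [A.abs_prod, hP, ← Finset.prod_mul_distrib]
    calc ∏ i, A.abs (c (σ i) i) * ν.nu (u i)
        ≤ ∏ i, ν.nu (w (σ i)) :=
          Finset.prod_le_prod (fun i _ => mul_nonneg (A.nonneg _) (ν.nonneg _))
            (fun i _ => hterm (σ i) i)
      _ = ∏ i, ν.nu (w i) := Equiv.prod_comp σ (fun i => ν.nu (w i))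
  have hne : (Finset.univ : Finset (Equiv.Perm (Fin n))).Nonempty := ⟨1, Finset.mem_univ 1⟩
  obtain ⟨σ₀, -, hσ₀⟩ := Finset.exists_mem_eq_sup' hne
    (fun σ : Equiv.Perm (Fin n) => A.abs (∏ i, c (σ i) i))
  have hdet : A.abs c.det ≤ A.abs (∏ i, c (σ₀ i) i) := by
    rw [Matrix.det_apply']
    refine A.abs_sum_le (A.nonneg _) fun σ _ => ?_
    rw [A.abs_sign_mul]
    exact hσ₀ ▸ Finset.le_sup'
      (fun σ : Equiv.Perm (Fin n) => A.abs (∏ i, c (σ i) i)) (Finset.mem_univ σ)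
  calc A.abs c.det * P ≤ A.abs (∏ i, c (σ₀ i) i) * P := mul_le_mul_of_nonneg_right hdet hPnn
    _ ≤ ∏ i, ν.nu (w i) := hperm σ₀

lemma prod_orth_eq (A : NAAbs F) (ν : NANorm A V) {n : ℕ} (u w : Fin n → V)
    (c : Matrix (Fin n) (Fin n) F) (hc : IsUnit c.det)
    (hw : ∀ i, w i = ∑ j, c i j • u j)
    (huo : IsOrthogonalFor A ν.nu u) (hwo : IsOrthogonalFor A ν.nu w) :
    ∏ i, ν.nu (w i) = A.abs c.det * ∏ i, ν.nu (u i) := by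
  have h1 := det_mul_prod_le A ν u w c hw huo
  have hinv : ∀ i, u i = ∑ j, c⁻¹ i j • w j := by
    intro i
    have h2 : ∑ j, c⁻¹ i j • w j = ∑ k, (c⁻¹ * c) i k • u k := by
      simp only [hw, Matrix.mul_apply]
      exact sum_smul_sum (fun j => c⁻¹ i j) (fun j k => c j k) u
    rw [h2, Matrix.nonsing_inv_mul c hc]
    simp [Matrix.one_apply, ite_smul]
  have h2 := det_mul_prod_le A ν w u c⁻¹ hinv hwo
  have hD0 : A.abs c.det ≠ 0 := fun h => hc.ne_zero ((A.eq_zero _).mp h)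
  have hDpos : 0 < A.abs c.det := lt_of_le_of_ne (A.nonneg _) (Ne.symm hD0)
  have hdetinv : A.abs c⁻¹.det = (A.abs c.det)⁻¹ := by
    rw [Matrix.det_nonsing_inv, Ring.inverse_eq_inv, A.abs_inv]
  rw [hdetinv] at h2
  refine le_antisymm ?_ h1
  have := mul_le_mul_of_nonneg_left h2 hDpos.le
  rwa [← mul_assoc, mul_inv_cancel₀ hD0, one_mul] at this

end Aux

set_option maxHeartbeats 1000000 in
/-- Transformation law of the imaginary part: with
`ν_{g·z} = |j(g,z)|⁻¹ (g*ν_z)`, `|j(g,z)| = ν_z(last row of g)`, and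
`im(z) = D(ν_z)` (computed via orthogonal bases of the standard lattice),
`im(g·z) = (|det g|_F / |j(g,z)|^r) · im(z)`.  (Rank `r + 1 ≥ 1`.) -/
theorem statement13 {F : Type*} [Field F] (A : NAAbs F) (π : F) (hloc : A.IsLocal π)
    (r : ℕ) (ν : NANorm A (Fin (r + 1) → F))
    (g : Matrix (Fin (r + 1)) (Fin (r + 1)) F) (hg : IsUnit g.det)
    (J : ℝ) (hJ : J = ν.nu (g (Fin.last r)))
    (u u' : Fin (r + 1) → (Fin (r + 1) → F))
    (hu : IsLatticeBasis A u {x : Fin (r + 1) → F | ∀ i, A.abs (x i) ≤ 1})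
    (huo : IsOrthogonalFor A ν.nu u)
    (hu' : IsLatticeBasis A u' {x : Fin (r + 1) → F | ∀ i, A.abs (x i) ≤ 1})
    (hu'o : IsOrthogonalFor A (fun x => J⁻¹ * ν.nu (Matrix.vecMul x g)) u') :
    ∏ i, J⁻¹ * ν.nu (Matrix.vecMul (u' i) g)
      = (A.abs g.det / J ^ (r + 1)) * ∏ i, ν.nu (u i) := by
  classical
  have hdet0 : g.det ≠ 0 := hg.ne_zero
  have hrow : g (Fin.last r) ≠ 0 := by
    intro h
    exact hdet0 (Matrix.det_eq_zero_of_row_eq_zero (Fin.last r) (fun j => congrFun h j))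
  have hJpos : 0 < J := by
    rw [hJ]
    exact lt_of_le_of_ne (ν.nonneg _) (fun h => hrow ((ν.eq_zero _).mp h.symm))
  set w : Fin (r + 1) → (Fin (r + 1) → F) := fun i => Matrix.vecMul (u' i) g with hwdef
  -- orthogonality of w for ν
  have hwo : IsOrthogonalFor A ν.nu w := by
    intro c
    have h := hu'o c
    simp only [] at h
    have e1 : Matrix.vecMul (∑ i, c i • u' i) g = ∑ i, c i • w i := by
      rw [← Matrix.vecMulLinear_apply, map_sum]
      simp only [map_smul, Matrix.vecMulLinear_apply, hwdef]
    have e2 : ∀ i, Matrix.vecMul (c i • u' i) g = c i • w i := fun i => by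
      rw [← Matrix.vecMulLinear_apply, map_smul, Matrix.vecMulLinear_apply]
    rw [e1] at h
    simp only [e2] at h
    rw [← Real.mul_iSup_of_nonneg (inv_nonneg.mpr hJpos.le)] at h
    exact mul_left_cancel₀ (inv_ne_zero hJpos.ne') h
  -- each member of a lattice basis lies in the lattice
  have single : ∀ v : Fin (r + 1) → (Fin (r + 1) → F),
      (∀ x : Fin (r + 1) → F, x ∈ {x : Fin (r + 1) → F | ∀ i, A.abs (x i) ≤ 1} ↔
        ∃ c : Fin (r + 1) → F, (∀ i, A.abs (c i) ≤ 1) ∧ x = ∑ i, c i • v i) →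
      ∀ i, v i ∈ {x : Fin (r + 1) → F | ∀ i, A.abs (x i) ≤ 1} := by
    intro v hv i
    refine (hv (v i)).mpr ⟨fun j => if j = i then 1 else 0, ?_, ?_⟩
    · intro j
      by_cases hji : j = i
      · subst hji; simp [A.abs_one]
      · simp only [if_neg hji, (A.eq_zero 0).mpr rfl]; norm_num
    · simp [ite_smul]
  choose H Hb HEq using fun i => (hu.2 (u' i)).mp (single u' hu'.2 i)
  choose H' H'b H'Eq using fun i => (hu'.2 (u i)).mp (single u hu.2 i)
  -- H * H' = 1
  have key : ∀ i k, (∑ j, H i j * H' j k) = if k = i then (1 : F) else 0 := by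
    intro i k
    have e1 : u' i = ∑ k, (∑ j, H i j * H' j k) • u' k := by
      calc u' i = ∑ j, H i j • u j := HEq i
        _ = ∑ j, H i j • ∑ k, H' j k • u' k :=
              Finset.sum_congr rfl fun j _ => by rw [H'Eq j]
        _ = ∑ k, (∑ j, H i j * H' j k) • u' k := sum_smul_sum (fun j => H i j) H' u'
    have e2 : u' i = ∑ k, (if k = i then (1 : F) else 0) • u' k := by simp [ite_smul]
    have e3 : ∑ k, ((∑ j, H i j * H' j k) - if k = i then (1 : F) else 0) • u' k = 0 := by
      simp only [sub_smul, Finset.sum_sub_distrib]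
      rw [← e1, ← e2, sub_self]
    exact sub_eq_zero.mp (Fintype.linearIndependent_iff.mp hu'.1 _ e3 k)
  have hHH' : Matrix.of H * Matrix.of H' = 1 := by
    ext i k
    rw [Matrix.mul_apply, Matrix.one_apply]
    simp only [Matrix.of_apply]
    rw [key i k]
    rcases eq_or_ne i k with h | h
    · simp [h]
    · simp [h, Ne.symm h]
  -- |det H| = 1
  have habsle : ∀ M : Fin (r + 1) → Fin (r + 1) → F, (∀ i j, A.abs (M i j) ≤ 1) →
      A.abs (Matrix.of M).det ≤ 1 := by
    intro M hM
    rw [Matrix.det_apply']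
    refine A.abs_sum_le zero_le_one fun σ _ => ?_
    rw [A.abs_sign_mul, A.abs_prod]
    exact Finset.prod_le_one (fun i _ => A.nonneg _) (fun i _ => hM _ _)
  have hHdet : A.abs (Matrix.of H).det = 1 := by
    have hmul : A.abs (Matrix.of H).det * A.abs (Matrix.of H').det = 1 := by
      rw [← A.map_mul, ← Matrix.det_mul, hHH', Matrix.det_one, A.abs_one]
    nlinarith [habsle H Hb, habsle H' H'b, A.nonneg (Matrix.of H).det,
      A.nonneg (Matrix.of H').det]
  -- the matrix G with (u j) * g = ∑ k, G j k • u k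
  have hUunit : IsUnit (Matrix.of u) := Matrix.linearIndependent_rows_iff_isUnit.mp hu.1
  have hUdet : IsUnit (Matrix.of u).det := (Matrix.isUnit_iff_isUnit_det _).mp hUunit
  set U := Matrix.of u with hUdef
  set G := U * g * U⁻¹ with hGdef
  have hGU : G * U = U * g := by
    rw [hGdef, Matrix.mul_assoc (U * g), Matrix.nonsing_inv_mul U hUdet, Matrix.mul_one]
  have hGdet : G.det = g.det := by
    have h1 : G.det * U.det = U.det * g.det := by rw [← Matrix.det_mul, hGU, Matrix.det_mul]
    exact mul_right_cancel₀ hUdet.ne_zero (by rw [h1, mul_comm])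
  have hGu : ∀ j, Matrix.vecMul (u j) g = ∑ k, G j k • u k := by
    intro j; funext l
    have h1 : Matrix.vecMul (u j) g l = (U * g) j l := by
      simp [Matrix.mul_apply, Matrix.vecMul, dotProduct, hUdef]
    rw [h1, ← hGU]
    simp [Matrix.mul_apply, Finset.sum_apply, hUdef]
  -- change of basis matrix c = H * G
  have hcw : ∀ i, w i = ∑ k, (Matrix.of H * G) i k • u k := by
    intro i
    calc w i = Matrix.vecMul (∑ j, H i j • u j) g := by rw [hwdef]; rw [← HEq i]
      _ = ∑ j, H i j • Matrix.vecMul (u j) g := by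
          rw [← Matrix.vecMulLinear_apply, map_sum]
          simp only [map_smul, Matrix.vecMulLinear_apply]
      _ = ∑ j, H i j • ∑ k, G j k • u k := by simp only [hGu]
      _ = ∑ k, (∑ j, H i j * G j k) • u k := sum_smul_sum (fun j => H i j) (fun j k => G j k) u
      _ = ∑ k, (Matrix.of H * G) i k • u k := by simp only [Matrix.mul_apply, Matrix.of_apply]
  have hHunit : IsUnit (Matrix.of H).det :=
    IsUnit.of_mul_eq_one (Matrix.of H').det (by rw [← Matrix.det_mul, hHH', Matrix.det_one])
  have hcdet : IsUnit (Matrix.of H * G).det := by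
    rw [Matrix.det_mul]
    exact hHunit.mul (hGdet ▸ hg)
  have main : ∏ i, ν.nu (w i) = A.abs g.det * ∏ i, ν.nu (u i) := by
    rw [prod_orth_eq A ν u w (Matrix.of H * G) hcdet hcw huo hwo,
      Matrix.det_mul, A.map_mul, hHdet, hGdet, one_mul]
  calc ∏ i, J⁻¹ * ν.nu (Matrix.vecMul (u' i) g)
      = (∏ _i : Fin (r + 1), J⁻¹) * ∏ i, ν.nu (w i) := by
        rw [← Finset.prod_mul_distrib]
    _ = (J⁻¹) ^ (r + 1) * (A.abs g.det * ∏ i, ν.nu (u i)) := by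
        rw [main, Finset.prod_const, Finset.card_univ, Fintype.card_fin]
    _ = (A.abs g.det / J ^ (r + 1)) * ∏ i, ν.nu (u i) := by
        rw [inv_pow, div_eq_mul_inv]; ring
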